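/- Let f : F → C be a classifier on a finite product input space F = X_1 × ⋯ × X_n and let D be a product (feature-independent) distribution on F. Then the global contrastive value function v^g_con is submodular: for all S ⊆ S' ⊆ {1,…,n} and all i ∉ S', v^g_con(S ∪ {i}) − v^g_con(S) ≥ v^g_con(S' ∪ {i}) − v^g_con(S'). -/

import Mathlib

open Finset

open Classical in
/-- Conditional probability `Pr(A | B) = Pr(A ∩ B) / Pr(B)` over a finite space,
with mass function `P`. -/
noncomputable def condPr {F : Type*} [Fintype F] (P : F → ℝ) (A B : F → Prop) : ℝ :=
  (∑ z, if A z ∧ B z then P z else 0) / (∑ z, if B z then P z else 0)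

open Classical in
/-- The global contrastive value function
`v^g_con(S) = Σ_{x : P x > 0} P x · Pr_{z∼D}(f z ≠ f x | z_S̄ = x_S̄)`,
where `S̄ = {1,…,n} \ S`. -/
noncomputable def vgCon {n : ℕ} {X : Fin n → Type*} [∀ i, Fintype (X i)]
    {C : Type*} (f : (∀ i, X i) → C) (P : (∀ i, X i) → ℝ)
    (S : Finset (Fin n)) : ℝ :=
  ∑ x ∈ Finset.univ.filter (fun x => 0 < P x),
    P x * condPr P (fun z => f z ≠ f x) (fun z => ∀ i ∈ Sᶜ, z i = x i)

section Aux

open Classical in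
noncomputable def ind (p : Prop) : ℝ := if p then 1 else 0

lemma ind_nonneg (p : Prop) : 0 ≤ ind p := by
  unfold ind; split <;> norm_num

lemma ind_le_one (p : Prop) : ind p ≤ 1 := by
  unfold ind; split <;> norm_num

/-- sums commute through weights -/
lemma swap2 {α β : Type*} [Fintype α] [Fintype β] (μ : α → ℝ) (ν : β → ℝ)
    (X : α → β → ℝ) :
    ∑ a, μ a * ∑ b, ν b * X a b = ∑ b, ν b * ∑ a, μ a * X a b := by
  simp only [Finset.mul_sum]
  rw [Finset.sum_comm]
  apply Finset.sum_congr rfl; intro b _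
  apply Finset.sum_congr rfl; intro a _
  ring

lemma pullc {α γ : Type*} [Fintype α] [Fintype γ] (μ : α → ℝ) (X : α → γ → ℝ) :
    ∑ a, μ a * ∑ c, X a c = ∑ c, ∑ a, μ a * X a c := by
  simp only [Finset.mul_sum]
  exact Finset.sum_comm

lemma pack2 {α β : Type*} [Fintype α] [Fintype β] (μ : α → ℝ) (ν : β → ℝ)
    (X : α → β → ℝ) :
    ∑ a, μ a * ∑ b, ν b * X a b = ∑ p : α × β, μ p.1 * ν p.2 * X p.1 p.2 := by
  rw [Fintype.sum_prod_type]
  apply Finset.sum_congr rfl; intro a _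
  rw [Finset.mul_sum]
  apply Finset.sum_congr rfl; intro b _
  ring

lemma csum {α : Type*} [Fintype α] (w : α → ℝ) {g h : α → ℝ}
    (H : ∀ a, g a = h a) : ∑ a, w a * g a = ∑ a, w a * h a := by
  apply Finset.sum_congr rfl; intro a _; rw [H a]

/-- collapse a double sum against indicator of equal classes into a sum of squares
over classes -/
lemma G2 {B C : Type*} [Fintype B] [Fintype C] (β : B → ℝ) (g : B → C) :
    ∑ u, β u * ∑ v, β v * ind (g v = g u) = ∑ c, (∑ u, β u * ind (g u = c)) ^ 2 := by
  classical
  have : ∀ c, (∑ u, β u * ind (g u = c)) ^ 2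
      = ∑ u, β u * (ind (g u = c) * ∑ v, β v * ind (g v = c)) := by
    intro c
    rw [sq, Finset.sum_mul]
    apply Finset.sum_congr rfl; intro u _; ring
  rw [Finset.sum_congr rfl fun c _ => this c, Finset.sum_comm]
  apply Finset.sum_congr rfl; intro u _
  rw [← Finset.mul_sum]
  congr 1
  have : ∀ c, ind (g u = c) * ∑ v, β v * ind (g v = c)
      = if g u = c then (∑ v, β v * ind (g v = c)) else 0 := by
    intro c; unfold ind; split <;> simp
  rw [Finset.sum_congr rfl fun c _ => this c, Finset.sum_ite_eq univ (g u)
    (fun c => ∑ v, β v * ind (g v = c))]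
  simp


/-- Finite Efron–Stein / ANOVA inequality. -/
lemma anova {B T : Type*} [Fintype B] [Fintype T] (β : B → ℝ) (τ : T → ℝ)
    (hβ0 : ∀ b, 0 ≤ β b) (hτ0 : ∀ t, 0 ≤ τ t)
    (hβ1 : ∑ b, β b = 1) (hτ1 : ∑ t, τ t = 1) (F : B → T → ℝ) :
    ∑ t, τ t * (∑ b, β b * F b t) ^ 2 + ∑ b, β b * (∑ t, τ t * F b t) ^ 2 ≤
      (∑ b, β b * ∑ t, τ t * F b t ^ 2) + (∑ b, β b * ∑ t, τ t * F b t) ^ 2 := by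
  classical
  set A : T → ℝ := fun t => ∑ b, β b * F b t with hA
  set Bf : B → ℝ := fun b => ∑ t, τ t * F b t with hBf
  set μ : ℝ := ∑ b, β b * Bf b with hμ
  have hμt : ∑ t, τ t * A t = μ := by
    rw [hμ]
    simp only [hA, hBf, Finset.mul_sum]
    rw [Finset.sum_comm]
    exact Finset.sum_congr rfl fun b _ => Finset.sum_congr rfl fun t _ => by ring
  have expand : ∀ b t, τ t * (F b t - A t - Bf b + μ) ^ 2
      = τ t * F b t ^ 2 + τ t * (A t) ^ 2 + τ t * (Bf b) ^ 2 + τ t * μ ^ 2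
        - 2 * (τ t * (F b t * A t)) - (2 * Bf b) * (τ t * F b t)
        + (2 * μ) * (τ t * F b t) + (2 * Bf b) * (τ t * A t)
        - (2 * μ) * (τ t * A t) - (2 * (Bf b * μ)) * τ t := fun b t => by ring
  have inner : ∀ b, ∑ t, τ t * (F b t - A t - Bf b + μ) ^ 2
      = ∑ t, τ t * F b t ^ 2 + ∑ t, τ t * (A t) ^ 2
        - 2 * ∑ t, τ t * (F b t * A t) - (Bf b) ^ 2 - μ ^ 2 + 2 * μ * Bf b := by
    intro b
    rw [Finset.sum_congr rfl fun t _ => expand b t]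
    simp only [Finset.sum_add_distrib, Finset.sum_sub_distrib]
    have i1 : ∑ t, τ t * (Bf b) ^ 2 = (Bf b) ^ 2 := by
      rw [← Finset.sum_mul, hτ1, one_mul]
    have i2 : ∑ t, τ t * μ ^ 2 = μ ^ 2 := by rw [← Finset.sum_mul, hτ1, one_mul]
    have i3 : ∑ t, 2 * (τ t * (F b t * A t)) = 2 * ∑ t, τ t * (F b t * A t) := by
      rw [Finset.mul_sum]
    have i4 : ∑ t, (2 * Bf b) * (τ t * F b t) = 2 * Bf b * Bf b := by
      rw [← Finset.mul_sum, show (∑ t, τ t * F b t) = Bf b from rfl]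
    have i5 : ∑ t, (2 * μ) * (τ t * F b t) = 2 * μ * Bf b := by
      rw [← Finset.mul_sum, show (∑ t, τ t * F b t) = Bf b from rfl]
    have i6 : ∑ t, (2 * Bf b) * (τ t * A t) = 2 * Bf b * μ := by
      rw [← Finset.mul_sum, hμt]
    have i7 : ∑ t, (2 * μ) * (τ t * A t) = 2 * μ * μ := by
      rw [← Finset.mul_sum, hμt]
    have i8 : ∑ t, (2 * (Bf b * μ)) * τ t = 2 * (Bf b * μ) := by
      rw [← Finset.mul_sum, hτ1, mul_one]
    rw [i1, i2, i3, i4, i5, i6, i7, i8]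
    ring
  have g2 : ∑ b, β b * ∑ t, τ t * (F b t * A t) = ∑ t, τ t * (A t) ^ 2 := by
    rw [swap2 β τ (fun b t => F b t * A t)]
    apply Finset.sum_congr rfl; intro t _
    congr 1
    rw [sq, show (∑ b, β b * (F b t * A t)) = (∑ b, β b * F b t) * A t from by
      rw [Finset.sum_mul]; exact Finset.sum_congr rfl fun b _ => by ring]
  have key : ∑ b, β b * ∑ t, τ t * (F b t - A t - Bf b + μ) ^ 2
      = (∑ b, β b * ∑ t, τ t * F b t ^ 2) + μ ^ 2
        - ∑ t, τ t * (A t) ^ 2 - ∑ b, β b * (Bf b) ^ 2 := by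
    have j : ∀ b, β b * (∑ t, τ t * F b t ^ 2 + ∑ t, τ t * (A t) ^ 2
        - 2 * ∑ t, τ t * (F b t * A t) - (Bf b) ^ 2 - μ ^ 2 + 2 * μ * Bf b)
        = β b * ∑ t, τ t * F b t ^ 2 + β b * ∑ t, τ t * (A t) ^ 2
          - 2 * (β b * ∑ t, τ t * (F b t * A t)) - β b * (Bf b) ^ 2
          - β b * μ ^ 2 + (2 * μ) * (β b * Bf b) := fun b => by ring
    rw [Finset.sum_congr rfl fun b _ => by rw [inner b, j b]]
    simp only [Finset.sum_add_distrib, Finset.sum_sub_distrib]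
    have k1 : ∑ b, β b * ∑ t, τ t * (A t) ^ 2 = ∑ t, τ t * (A t) ^ 2 := by
      rw [← Finset.sum_mul, hβ1, one_mul]
    have k2 : ∑ b, 2 * (β b * ∑ t, τ t * (F b t * A t))
        = 2 * ∑ t, τ t * (A t) ^ 2 := by rw [← Finset.mul_sum, g2]
    have k3 : ∑ b, β b * μ ^ 2 = μ ^ 2 := by rw [← Finset.sum_mul, hβ1, one_mul]
    have k4 : ∑ b, (2 * μ) * (β b * Bf b) = 2 * μ * μ := by
      rw [← Finset.mul_sum, ← hμ]
    rw [k1, k2, k3, k4]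
    ring
  have pos : 0 ≤ ∑ b, β b * ∑ t, τ t * (F b t - A t - Bf b + μ) ^ 2 := by
    apply Finset.sum_nonneg; intro b _
    apply mul_nonneg (hβ0 b)
    apply Finset.sum_nonneg; intro t _
    exact mul_nonneg (hτ0 t) (sq_nonneg _)
  have r1 : ∑ t, τ t * (∑ b, β b * F b t) ^ 2 = ∑ t, τ t * (A t) ^ 2 := rfl
  have r2 : (∑ b, β b * (∑ t, τ t * F b t) ^ 2) = ∑ b, β b * (Bf b) ^ 2 := rfl
  have r3 : (∑ b, β b * ∑ t, τ t * F b t) = μ := rfl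
  rw [r1, r2]
  linarith [key, pos]

section Mgstuff

variable {n : ℕ} {X : Fin n → Type*} [∀ i, Fintype (X i)]

/-- merge: coordinates in `S` from `u`, the rest from `v`. -/
def Mg (S : Finset (Fin n)) (u v : ∀ i, X i) : ∀ i, X i :=
  fun j => if j ∈ S then u j else v j

lemma Mg_Mg (S : Finset (Fin n)) (u v : ∀ i, X i) :
    Mg S (Mg S u v) (Mg S v u) = u := by
  funext j; by_cases h : j ∈ S <;> simp [Mg, h]

/-- the swap involution on pairs -/
def MgSwap (S : Finset (Fin n)) : ((∀ i, X i) × (∀ i, X i)) ≃ ((∀ i, X i) × (∀ i, X i)) where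
  toFun p := (Mg S p.1 p.2, Mg S p.2 p.1)
  invFun p := (Mg S p.1 p.2, Mg S p.2 p.1)
  left_inv p := by simp [Mg_Mg]
  right_inv p := by simp [Mg_Mg]

variable (q : ∀ i, X i → ℝ) (P : (∀ i, X i) → ℝ)

lemma Mg_weight (hPQ : ∀ x, P x = ∏ i, q i (x i)) (S : Finset (Fin n))
    (u v : ∀ i, X i) : P (Mg S u v) * P (Mg S v u) = P u * P v := by
  rw [hPQ, hPQ, hPQ, hPQ, ← Finset.prod_mul_distrib, ← Finset.prod_mul_distrib]
  exact Finset.prod_congr rfl fun j _ => by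
    by_cases h : j ∈ S <;> simp [Mg, h, mul_comm]

variable (hPQ : ∀ x, P x = ∏ i, q i (x i)) (hq1 : ∀ i, ∑ v, q i v = 1)
include hPQ hq1

lemma sumP_one : ∑ x, P x = 1 := by
  calc ∑ x, P x = ∑ x : ∀ i, X i, ∏ i, q i (x i) :=
        Finset.sum_congr rfl fun x _ => hPQ x
    _ = ∏ i, ∑ v, q i v := (Fintype.prod_sum _).symm
    _ = 1 := by simp [hq1]

/-- Fundamental splitting lemma. -/
lemma FSL (S : Finset (Fin n)) (G : (∀ i, X i) → ℝ) :
    ∑ x, P x * G x = ∑ u, ∑ v, P u * P v * G (Mg S u v) := by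
  have h1 : ∑ x, P x * G x = ∑ p : (∀ i, X i) × (∀ i, X i), P p.1 * P p.2 * G p.1 := by
    rw [Fintype.sum_prod_type]
    calc ∑ x, P x * G x = (∑ x, P x * G x) * ∑ v, P v := by
          rw [sumP_one q P hPQ hq1, mul_one]
      _ = ∑ u, ∑ v, P u * P v * G u := by
          rw [Finset.sum_mul]
          exact Finset.sum_congr rfl fun u _ => by
            rw [Finset.mul_sum]
            exact Finset.sum_congr rfl fun v _ => by ring
    -- reorder: goal is `... = ∑ a, ∑ b, P a * P b * G a`; matches
  rw [h1, ← Equiv.sum_comp (MgSwap S) (fun p => P p.1 * P p.2 * G p.1), Fintype.sum_prod_type]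
  apply Finset.sum_congr rfl; intro u _
  apply Finset.sum_congr rfl; intro v _
  show P (Mg S u v) * P (Mg S v u) * G (Mg S u v) = P u * P v * G (Mg S u v)
  rw [Mg_weight q P hPQ]

/-- FSL with weights peeled. -/
lemma FSL' (S : Finset (Fin n)) (G : (∀ i, X i) → ℝ) :
    ∑ x, P x * G x = ∑ v, P v * ∑ u, P u * G (Mg S u v) := by
  rw [FSL q P hPQ hq1 S G, Finset.sum_comm]
  apply Finset.sum_congr rfl; intro v _
  rw [Finset.mul_sum]
  exact Finset.sum_congr rfl fun u _ => by ring

end Mgstuff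

section CondPr

variable {n : ℕ} {X : Fin n → Type*} [∀ i, Fintype (X i)]
variable (q : ∀ i, X i → ℝ) (P : (∀ i, X i) → ℝ)
variable (hPQ : ∀ x, P x = ∏ i, q i (x i)) (hq1 : ∀ i, ∑ v, q i v = 1)
include hPQ hq1

open Classical in
lemma denom_eq_c (S : Finset (Fin n)) (x : ∀ i, X i) :
    (∑ z, if (∀ i ∈ Sᶜ, z i = x i) then P z else 0) = ∏ i ∈ Sᶜ, q i (x i) := by
  have hterm : ∀ z : ∀ i, X i, (if (∀ i ∈ Sᶜ, z i = x i) then P z else 0)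
      = ∏ i, (if i ∈ Sᶜ then (if z i = x i then q i (z i) else 0) else q i (z i)) := by
    intro z
    by_cases hc : ∀ i ∈ Sᶜ, z i = x i
    · rw [if_pos hc, hPQ]
      exact Finset.prod_congr rfl fun j _ => by
        by_cases hj : j ∈ Sᶜ
        · simp [hj, hc j hj]
        · simp [hj]
    · rw [if_neg hc]
      push_neg at hc
      obtain ⟨j, hj, hne⟩ := hc
      exact (Finset.prod_eq_zero (Finset.mem_univ j) (by simp [hj, hne])).symm
  rw [Finset.sum_congr rfl fun z _ => hterm z,
    show (∑ z : ∀ i, X i, ∏ i,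
        (if i ∈ Sᶜ then (if z i = x i then q i (z i) else 0) else q i (z i)))
      = ∏ i, ∑ v, (if i ∈ Sᶜ then (if v = x i then q i v else 0) else q i v)
    from (Fintype.prod_sum fun i v =>
      if i ∈ Sᶜ then (if v = x i then q i v else 0) else q i v).symm]
  have hfac : ∀ i, (∑ v, if i ∈ Sᶜ then (if v = x i then q i v else 0) else q i v)
      = if i ∈ Sᶜ then q i (x i) else 1 := by
    intro i
    by_cases hi : i ∈ Sᶜ
    · simp only [hi, if_true]
      rw [Finset.sum_ite_eq' Finset.univ (x i) (q i)]
      simp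
    · simp only [hi, if_false]
      exact hq1 i
  rw [Finset.prod_congr rfl fun i _ => hfac i, Finset.prod_ite_mem]
  simp

open Classical in
lemma denom_eq_ind (S : Finset (Fin n)) (x : ∀ i, X i) :
    (∑ z, P z * ind (∀ i ∈ Sᶜ, z i = x i)) = ∏ i ∈ Sᶜ, q i (x i) := by
  have hterm : ∀ z : ∀ i, X i, P z * ind (∀ i ∈ Sᶜ, z i = x i)
      = if (∀ i ∈ Sᶜ, z i = x i) then P z else 0 := by
    intro z; unfold ind; split <;> simp
  rw [Finset.sum_congr rfl fun z _ => hterm z]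
  exact denom_eq_c q P hPQ hq1 S x

open Classical in
lemma numer_eq (S : Finset (Fin n)) (x : ∀ i, X i) (A B : (∀ i, X i) → Prop)
    (hB : ∀ z, B z = ∀ i ∈ Sᶜ, z i = x i) :
    (∑ z, if A z ∧ B z then P z else 0)
      = (∏ i ∈ Sᶜ, q i (x i)) * ∑ z, P z * ind (A (Mg S z x)) := by
  simp only [hB]
  have step1 : (∑ z, if (A z ∧ ∀ i ∈ Sᶜ, z i = x i) then P z else 0)
      = ∑ z, P z * (ind (A z) * ind (∀ i ∈ Sᶜ, z i = x i)) := by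
    apply Finset.sum_congr rfl; intro z _
    unfold ind
    by_cases h1 : A z <;> by_cases h2 : ∀ i ∈ Sᶜ, z i = x i <;>
      simp [h1, h2]
  rw [step1, FSL q P hPQ hq1 S (fun z => ind (A z) * ind (∀ i ∈ Sᶜ, z i = x i))]
  have step2 : ∀ u v : ∀ i, X i,
      ind (A (Mg S u v)) * ind (∀ i ∈ Sᶜ, (Mg S u v) i = x i)
        = ind (A (Mg S u x)) * ind (∀ i ∈ Sᶜ, v i = x i) := by
    intro u v
    have hmem : ∀ i ∈ Sᶜ, (Mg S u v) i = v i := by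
      intro i hi
      rw [Finset.mem_compl] at hi
      simp [Mg, hi]
    have hiff : (∀ i ∈ Sᶜ, (Mg S u v) i = x i) ↔ (∀ i ∈ Sᶜ, v i = x i) := by
      constructor <;> intro h i hi
      · rw [← hmem i hi]; exact h i hi
      · rw [hmem i hi]; exact h i hi
    by_cases hc : ∀ i ∈ Sᶜ, v i = x i
    · have heq : Mg S u v = Mg S u x := by
        funext j
        by_cases hj : j ∈ S
        · simp [Mg, hj]
        · simp only [Mg, if_neg hj]
          exact hc j (Finset.mem_compl.mpr hj)
      rw [heq]
      congr 1
      unfold ind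
      have h3 : ∀ i ∈ Sᶜ, Mg S u x i = x i := fun i hi => by
        rw [Finset.mem_compl] at hi; simp [Mg, hi]
      rw [if_pos h3, if_pos hc]
    · unfold ind
      rw [if_neg (fun h => hc (hiff.mp h)), if_neg hc, mul_zero, mul_zero]
  rw [Finset.sum_congr rfl fun u _ => Finset.sum_congr rfl fun v _ => by rw [step2 u v]]
  have step3 : ∀ u : ∀ i, X i, ∑ v : ∀ i, X i,
      P u * P v * (ind (A (Mg S u x)) * ind (∀ i ∈ Sᶜ, v i = x i))
        = (P u * ind (A (Mg S u x))) * ∑ v, P v * ind (∀ i ∈ Sᶜ, v i = x i) := by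
    intro u
    rw [Finset.mul_sum]
    apply Finset.sum_congr rfl; intro v _
    ring
  rw [Finset.sum_congr rfl fun u _ => step3 u, ← Finset.sum_mul,
    denom_eq_ind q P hPQ hq1 S x]
  ring

open Classical in
lemma vgCon_eq {C : Type*} (f : (∀ i, X i) → C) (hP0 : ∀ x, 0 ≤ P x)
    (S : Finset (Fin n)) :
    vgCon f P S = ∑ x, P x * ∑ z, P z * ind (f (Mg S z x) ≠ f x) := by
  unfold vgCon
  rw [← Finset.sum_filter_of_ne (p := fun x => 0 < P x)
    (f := fun x => P x * ∑ z, P z * ind (f (Mg S z x) ≠ f x))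
    (fun x _ hne => lt_of_le_of_ne (hP0 x)
      (fun h => hne (by show P x * _ = 0; rw [← h]; ring)))]
  apply Finset.sum_congr rfl
  intro x hx
  rw [Finset.mem_filter] at hx
  congr 1
  simp only [condPr, numer_eq q P hPQ hq1 S x (fun z => f z ≠ f x)
    (fun z => ∀ i ∈ Sᶜ, z i = x i) (fun z => rfl)]
  have hD : (∏ i ∈ Sᶜ, q i (x i)) ≠ 0 := by
    have hPx : P x ≠ 0 := ne_of_gt hx.2
    rw [hPQ] at hPx
    rw [Finset.prod_ne_zero_iff] at hPx ⊢
    exact fun i _ => hPx i (Finset.mem_univ i)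
  refine Eq.trans ?_ (mul_div_cancel_left₀
    (∑ z, P z * ind (f (Mg S z x) ≠ f x)) hD)
  congr 1
  exact Eq.trans (Finset.sum_congr rfl fun z _ => by congr)
    (denom_eq_c q P hPQ hq1 S x)

end CondPr

section Merges

variable {n : ℕ} {X : Fin n → Type*} [∀ i, Fintype (X i)]

/-- four-way merge -/
def Ng (S T : Finset (Fin n)) (i : Fin n) (a b t r : ∀ i, X i) : ∀ i, X i :=
  Mg S a (Mg {i} b (Mg T t r))

variable (S S' T : Finset (Fin n)) (i : Fin n)

lemma NgS (z a b t r : ∀ i, X i) :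
    Mg S z (Ng S T i a b t r) = Ng S T i z b t r := by
  funext j; by_cases hjS : j ∈ S <;> simp [Ng, Mg, hjS]

lemma NgiS (hiS : i ∉ S) (z a b t r : ∀ i, X i) :
    Mg (insert i S) z (Ng S T i a b t r) = Ng S T i z z t r := by
  funext j
  by_cases hjS : j ∈ S
  · simp [Ng, Mg, hjS, Finset.mem_insert]
  · by_cases hji : j = i
    · subst hji; simp [Ng, Mg, hjS, Finset.mem_insert]
    · simp [Ng, Mg, hjS, hji, Finset.mem_insert]

lemma NgS' (hT : T = S' \ S) (hSS' : S ⊆ S') (hi : i ∉ S')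
    (z a b t r : ∀ i, X i) :
    Mg S' z (Ng S T i a b t r) = Ng S T i z b z r := by
  funext j
  by_cases hjS : j ∈ S
  · simp [Ng, Mg, hjS, hSS' hjS]
  · by_cases hji : j = i
    · subst hji; simp [Ng, Mg, hjS, hi]
    · by_cases hjT : j ∈ T
      · have hj' : j ∈ S' := by rw [hT] at hjT; exact (Finset.mem_sdiff.mp hjT).1
        simp [Ng, Mg, hjS, hj', hji, hjT]
      · have hj' : j ∉ S' := fun h => hjT (by
          rw [hT]; exact Finset.mem_sdiff.mpr ⟨h, hjS⟩)
        simp [Ng, Mg, hjS, hj', hji, hjT]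

lemma NgiS' (hT : T = S' \ S) (hSS' : S ⊆ S') (hi : i ∉ S')
    (z a b t r : ∀ i, X i) :
    Mg (insert i S') z (Ng S T i a b t r) = Ng S T i z z z r := by
  funext j
  by_cases hjS : j ∈ S
  · simp [Ng, Mg, hjS, Finset.mem_insert, hSS' hjS]
  · by_cases hji : j = i
    · subst hji; simp [Ng, Mg, hjS, Finset.mem_insert]
    · by_cases hjT : j ∈ T
      · have hj' : j ∈ S' := by rw [hT] at hjT; exact (Finset.mem_sdiff.mp hjT).1
        simp [Ng, Mg, hjS, Finset.mem_insert, hji, hjT, hj']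
      · have hj' : j ∉ S' := fun h => hjT (by
          rw [hT]; exact Finset.mem_sdiff.mpr ⟨h, hjS⟩)
        simp [Ng, Mg, hjS, Finset.mem_insert, hji, hjT, hj']

lemma Ng6 (hiS : i ∉ S) (a w t r : ∀ i, X i) :
    Ng S T i (Mg S a w) (Mg S a w) t r = Ng S T i a w t r := by
  funext j
  by_cases hjS : j ∈ S
  · simp [Ng, Mg, hjS]
  · by_cases hji : j = i
    · subst hji; simp [Ng, Mg, hjS, hiS]
    · simp [Ng, Mg, hjS, hji]

lemma Ng7 (hTS : ∀ j ∈ T, j ∉ S) (a b w r : ∀ i, X i) :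
    Ng S T i (Mg S a w) b (Mg S a w) r = Ng S T i a b w r := by
  funext j
  by_cases hjS : j ∈ S
  · simp [Ng, Mg, hjS]
  · by_cases hji : j = i
    · subst hji; simp [Ng, Mg, hjS]
    · by_cases hjT : j ∈ T
      · simp [Ng, Mg, hjS, hji, hjT, hTS j hjT]
      · simp [Ng, Mg, hjS, hji, hjT]

lemma Ng8 (hiS : i ∉ S) (hTS : ∀ j ∈ T, j ∉ S) (a w r : ∀ i, X i) :
    Ng S T i (Mg S a w) (Mg S a w) (Mg S a w) r = Ng S T i a w w r := by
  funext j
  by_cases hjS : j ∈ S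
  · simp [Ng, Mg, hjS]
  · by_cases hji : j = i
    · subst hji; simp [Ng, Mg, hjS, hiS]
    · by_cases hjT : j ∈ T
      · simp [Ng, Mg, hjS, hji, hjT, hTS j hjT]
      · simp [Ng, Mg, hjS, hji, hjT]

lemma Ng9 (hiT : i ∉ T) (a b w r : ∀ i, X i) :
    Ng S T i a (Mg {i} b w) (Mg {i} b w) r = Ng S T i a b w r := by
  funext j
  by_cases hjS : j ∈ S
  · simp [Ng, Mg, hjS]
  · by_cases hji : j = i
    · subst hji; simp [Ng, Mg, hjS]
    · by_cases hjT : j ∈ T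
      · have : j ∉ ({i} : Finset (Fin n)) := by simp [hji]
        simp [Ng, Mg, hjS, hji, hjT]
      · simp [Ng, Mg, hjS, hji, hjT]

end Merges

section EFun

variable {n : ℕ} {X : Fin n → Type*} [∀ i, Fintype (X i)]

noncomputable def eFun {C : Type*} (f : (∀ i, X i) → C) (P : (∀ i, X i) → ℝ)
    (S : Finset (Fin n)) : ℝ :=
  ∑ x, P x * ∑ z, P z * ind (f (Mg S z x) = f x)

variable (q : ∀ i, X i → ℝ) (P : (∀ i, X i) → ℝ)
variable (hPQ : ∀ x, P x = ∏ i, q i (x i)) (hq1 : ∀ i, ∑ v, q i v = 1)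
include hPQ hq1

lemma vgCon_one_sub {C : Type*} (f : (∀ i, X i) → C) (hP0 : ∀ x, 0 ≤ P x)
    (S : Finset (Fin n)) : vgCon f P S = 1 - eFun f P S := by
  rw [vgCon_eq q P hPQ hq1 f hP0 S]
  unfold eFun
  have hz : ∀ x, ∑ z, P z * ind (f (Mg S z x) ≠ f x)
      = 1 - ∑ z, P z * ind (f (Mg S z x) = f x) := by
    intro x
    have : ∀ z, P z * ind (f (Mg S z x) ≠ f x)
        = P z - P z * ind (f (Mg S z x) = f x) := by
      intro z; unfold ind
      by_cases h : f (Mg S z x) = f x <;> simp [h]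
    rw [Finset.sum_congr rfl fun z _ => this z, Finset.sum_sub_distrib,
      sumP_one q P hPQ hq1]
  rw [csum P hz]
  have : ∀ x, P x * (1 - ∑ z, P z * ind (f (Mg S z x) = f x))
      = P x - P x * ∑ z, P z * ind (f (Mg S z x) = f x) := fun x => by ring
  rw [Finset.sum_congr rfl fun x _ => this x, Finset.sum_sub_distrib,
    sumP_one q P hPQ hq1]

variable (S T : Finset (Fin n)) (i : Fin n)

lemma FSL3 (G : (∀ i, X i) → ℝ) :
    ∑ x, P x * G x
      = ∑ r, P r * ∑ t, P t * ∑ b, P b * ∑ a, P a * G (Ng S T i a b t r) := by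
  rw [FSL' q P hPQ hq1 S G,
    FSL' q P hPQ hq1 {i} (fun w => ∑ a, P a * G (Mg S a w)),
    FSL' q P hPQ hq1 T (fun w => ∑ b, P b * ∑ a, P a * G (Mg S a (Mg {i} b w)))]
  rfl

end EFun

section Collapse

variable {n : ℕ} {X : Fin n → Type*} [∀ i, Fintype (X i)]
variable (P : (∀ i, X i) → ℝ) {C : Type*} [Fintype C]

lemma split2 (μ ν : (∀ i, X i) → ℝ) (h : (∀ i, X i) → (∀ i, X i) → ℝ) :
    ∑ a, ∑ b, μ a * ν b * h a b = ∑ a, μ a * ∑ b, ν b * h a b := by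
  refine Finset.sum_congr rfl fun a _ => ?_
  rw [Finset.mul_sum]
  exact Finset.sum_congr rfl fun b _ => by ring

lemma G2pair (g : (∀ i, X i) → (∀ i, X i) → C) :
    ∑ u1, P u1 * ∑ u2, P u2 * ∑ v1, P v1 * ∑ v2, P v2 * ind (g v1 v2 = g u1 u2)
      = ∑ c, (∑ u1, P u1 * ∑ u2, P u2 * ind (g u1 u2 = c)) ^ 2 := by
  calc ∑ u1, P u1 * ∑ u2, P u2 * ∑ v1, P v1 * ∑ v2, P v2 * ind (g v1 v2 = g u1 u2)
      = ∑ p : (∀ i, X i) × (∀ i, X i), P p.1 * P p.2 *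
          ∑ v1, P v1 * ∑ v2, P v2 * ind (g v1 v2 = g p.1 p.2) :=
        pack2 P P _
    _ = ∑ p : (∀ i, X i) × (∀ i, X i), P p.1 * P p.2 *
          ∑ v : (∀ i, X i) × (∀ i, X i), P v.1 * P v.2 * ind (g v.1 v.2 = g p.1 p.2) := by
        refine Finset.sum_congr rfl fun p _ => ?_
        congr 1
        exact pack2 P P _
    _ = ∑ c, (∑ p : (∀ i, X i) × (∀ i, X i), P p.1 * P p.2 * ind (g p.1 p.2 = c)) ^ 2 :=
        G2 (fun p : (∀ i, X i) × (∀ i, X i) => P p.1 * P p.2) (fun p => g p.1 p.2)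
    _ = ∑ c, (∑ u1, P u1 * ∑ u2, P u2 * ind (g u1 u2 = c)) ^ 2 := by
        refine Finset.sum_congr rfl fun c _ => ?_
        rw [← pack2 P P (fun u1 u2 => ind (g u1 u2 = c))]

lemma G2triple (g : (∀ i, X i) → (∀ i, X i) → (∀ i, X i) → C) :
    ∑ u1, P u1 * ∑ u2, P u2 * ∑ u3, P u3 *
        ∑ v1, P v1 * ∑ v2, P v2 * ∑ v3, P v3 * ind (g v1 v2 v3 = g u1 u2 u3)
      = ∑ c, (∑ u1, P u1 * ∑ u2, P u2 * ∑ u3, P u3 * ind (g u1 u2 u3 = c)) ^ 2 := by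
  have pk : ∀ h : (∀ i, X i) → (∀ i, X i) → (∀ i, X i) → ℝ,
      ∑ u1, P u1 * ∑ u2, P u2 * ∑ u3, P u3 * h u1 u2 u3
        = ∑ p : (∀ i, X i) × ((∀ i, X i) × (∀ i, X i)),
            P p.1 * (P p.2.1 * P p.2.2) * h p.1 p.2.1 p.2.2 := by
    intro h
    calc ∑ u1, P u1 * ∑ u2, P u2 * ∑ u3, P u3 * h u1 u2 u3
        = ∑ u1, P u1 * ∑ p : (∀ i, X i) × (∀ i, X i),
            P p.1 * P p.2 * h u1 p.1 p.2 := by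
          refine Finset.sum_congr rfl fun u1 _ => ?_
          congr 1
          exact pack2 P P _
      _ = ∑ p : (∀ i, X i) × ((∀ i, X i) × (∀ i, X i)),
            P p.1 * (P p.2.1 * P p.2.2) * h p.1 p.2.1 p.2.2 :=
          pack2 P (fun p : (∀ i, X i) × (∀ i, X i) => P p.1 * P p.2)
            (fun u1 p => h u1 p.1 p.2)
  calc ∑ u1, P u1 * ∑ u2, P u2 * ∑ u3, P u3 *
        ∑ v1, P v1 * ∑ v2, P v2 * ∑ v3, P v3 * ind (g v1 v2 v3 = g u1 u2 u3)
      = ∑ p : (∀ i, X i) × ((∀ i, X i) × (∀ i, X i)), P p.1 * (P p.2.1 * P p.2.2) *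
          ∑ v1, P v1 * ∑ v2, P v2 * ∑ v3, P v3 * ind (g v1 v2 v3 = g p.1 p.2.1 p.2.2) :=
        pk _
    _ = ∑ p : (∀ i, X i) × ((∀ i, X i) × (∀ i, X i)), P p.1 * (P p.2.1 * P p.2.2) *
          ∑ v : (∀ i, X i) × ((∀ i, X i) × (∀ i, X i)), P v.1 * (P v.2.1 * P v.2.2) *
            ind (g v.1 v.2.1 v.2.2 = g p.1 p.2.1 p.2.2) := by
        refine Finset.sum_congr rfl fun p _ => ?_
        congr 1
        exact pk _
    _ = ∑ c, (∑ p : (∀ i, X i) × ((∀ i, X i) × (∀ i, X i)),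
          P p.1 * (P p.2.1 * P p.2.2) * ind (g p.1 p.2.1 p.2.2 = c)) ^ 2 :=
        G2 (fun p : (∀ i, X i) × ((∀ i, X i) × (∀ i, X i)) => P p.1 * (P p.2.1 * P p.2.2))
          (fun p => g p.1 p.2.1 p.2.2)
    _ = ∑ c, (∑ u1, P u1 * ∑ u2, P u2 * ∑ u3, P u3 * ind (g u1 u2 u3 = c)) ^ 2 := by
        refine Finset.sum_congr rfl fun c _ => ?_
        rw [← pk (fun u1 u2 u3 => ind (g u1 u2 u3 = c))]

end Collapse

section Elemmas

variable {n : ℕ} {X : Fin n → Type*} [∀ i, Fintype (X i)]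
variable (q : ∀ i, X i → ℝ) (P : (∀ i, X i) → ℝ)
variable (hPQ : ∀ x, P x = ∏ i, q i (x i)) (hq1 : ∀ i, ∑ v, q i v = 1)
variable (S T : Finset (Fin n)) (i : Fin n)
variable {C : Type*} [Fintype C] (f : (∀ i, X i) → C)
include hPQ hq1

lemma E1 : eFun f P S = ∑ r, P r * ∑ c, ∑ b, P b * ∑ t, P t *
    (∑ a, P a * ind (f (Ng S T i a b t r) = c)) ^ 2 := by
  unfold eFun
  calc ∑ x, P x * ∑ z, P z * ind (f (Mg S z x) = f x)
      = ∑ r, P r * ∑ t, P t * ∑ b, P b * ∑ a, P a *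
          ∑ z, P z * ind (f (Mg S z (Ng S T i a b t r)) = f (Ng S T i a b t r)) :=
        FSL3 q P hPQ hq1 S T i _
    _ = ∑ r, P r * ∑ t, P t * ∑ b, P b * ∑ c,
          (∑ a, P a * ind (f (Ng S T i a b t r) = c)) ^ 2 := by
        refine csum P fun r => csum P fun t => csum P fun b => ?_
        simp only [NgS]
        exact G2 P (fun a => f (Ng S T i a b t r))
    _ = ∑ r, P r * ∑ c, ∑ b, P b * ∑ t, P t *
          (∑ a, P a * ind (f (Ng S T i a b t r) = c)) ^ 2 := by
        refine csum P fun r => ?_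
        calc ∑ t, P t * ∑ b, P b * ∑ c,
              (∑ a, P a * ind (f (Ng S T i a b t r) = c)) ^ 2
            = ∑ t, P t * ∑ c, ∑ b, P b *
              (∑ a, P a * ind (f (Ng S T i a b t r) = c)) ^ 2 :=
              csum P fun t => pullc P _
          _ = ∑ c, ∑ t, P t * ∑ b, P b *
              (∑ a, P a * ind (f (Ng S T i a b t r) = c)) ^ 2 := pullc P _
          _ = ∑ c, ∑ b, P b * ∑ t, P t *
              (∑ a, P a * ind (f (Ng S T i a b t r) = c)) ^ 2 :=
              Finset.sum_congr rfl fun c _ => swap2 P P _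

lemma E2 (hiS : i ∉ S) : eFun f P (insert i S) = ∑ r, P r * ∑ c, ∑ t, P t *
    (∑ b, P b * ∑ a, P a * ind (f (Ng S T i a b t r) = c)) ^ 2 := by
  unfold eFun
  calc ∑ x, P x * ∑ z, P z * ind (f (Mg (insert i S) z x) = f x)
      = ∑ r, P r * ∑ t, P t * ∑ b, P b * ∑ a, P a *
          ∑ z, P z * ind (f (Mg (insert i S) z (Ng S T i a b t r))
            = f (Ng S T i a b t r)) :=
        FSL3 q P hPQ hq1 S T i _
    _ = ∑ r, P r * ∑ t, P t * ∑ c,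
          (∑ b, P b * ∑ a, P a * ind (f (Ng S T i a b t r) = c)) ^ 2 := by
        refine csum P fun r => csum P fun t => ?_
        have hz : ∀ b a, (∑ z, P z * ind (f (Mg (insert i S) z (Ng S T i a b t r))
              = f (Ng S T i a b t r)))
            = ∑ v1, P v1 * ∑ v2, P v2 *
                ind (f (Ng S T i v2 v1 t r) = f (Ng S T i a b t r)) := by
          intro b a
          simp only [NgiS S T i hiS]
          rw [FSL q P hPQ hq1 S
            (fun z => ind (f (Ng S T i z z t r) = f (Ng S T i a b t r)))]
          simp only [Ng6 S T i hiS]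
          rw [split2 P P _, swap2 P P _]
        refine Eq.trans (csum P fun b => csum P fun a => hz b a) ?_
        exact G2pair P (fun u1 u2 => f (Ng S T i u2 u1 t r))
    _ = ∑ r, P r * ∑ c, ∑ t, P t *
          (∑ b, P b * ∑ a, P a * ind (f (Ng S T i a b t r) = c)) ^ 2 :=
        csum P fun r => pullc P _

lemma E3 (S' : Finset (Fin n)) (hT : T = S' \ S) (hSS' : S ⊆ S') (hi : i ∉ S') :
    eFun f P S' = ∑ r, P r * ∑ c, ∑ b, P b *
      (∑ t, P t * ∑ a, P a * ind (f (Ng S T i a b t r) = c)) ^ 2 := by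
  have hTS : ∀ j ∈ T, j ∉ S := fun j hj => by
    rw [hT] at hj; exact (Finset.mem_sdiff.mp hj).2
  unfold eFun
  calc ∑ x, P x * ∑ z, P z * ind (f (Mg S' z x) = f x)
      = ∑ r, P r * ∑ t, P t * ∑ b, P b * ∑ a, P a *
          ∑ z, P z * ind (f (Mg S' z (Ng S T i a b t r)) = f (Ng S T i a b t r)) :=
        FSL3 q P hPQ hq1 S T i _
    _ = ∑ r, P r * ∑ c, ∑ b, P b *
          (∑ t, P t * ∑ a, P a * ind (f (Ng S T i a b t r) = c)) ^ 2 := by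
        refine csum P fun r => ?_
        calc ∑ t, P t * ∑ b, P b * ∑ a, P a *
              ∑ z, P z * ind (f (Mg S' z (Ng S T i a b t r)) = f (Ng S T i a b t r))
            = ∑ b, P b * ∑ t, P t * ∑ a, P a *
              ∑ z, P z * ind (f (Mg S' z (Ng S T i a b t r)) = f (Ng S T i a b t r)) :=
              swap2 P P _
          _ = ∑ b, P b * ∑ c,
              (∑ t, P t * ∑ a, P a * ind (f (Ng S T i a b t r) = c)) ^ 2 := by
              refine csum P fun b => ?_
              have hz : ∀ t a, (∑ z, P z * ind (f (Mg S' z (Ng S T i a b t r))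
                    = f (Ng S T i a b t r)))
                  = ∑ v1, P v1 * ∑ v2, P v2 *
                      ind (f (Ng S T i v2 b v1 r) = f (Ng S T i a b t r)) := by
                intro t a
                simp only [NgS' S S' T i hT hSS' hi]
                rw [FSL q P hPQ hq1 S
                  (fun z => ind (f (Ng S T i z b z r) = f (Ng S T i a b t r)))]
                simp only [Ng7 S T i hTS]
                rw [split2 P P _, swap2 P P _]
              refine Eq.trans (csum P fun t => csum P fun a => hz t a) ?_
              exact G2pair P (fun u1 u2 => f (Ng S T i u2 b u1 r))
          _ = ∑ c, ∑ b, P b *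
              (∑ t, P t * ∑ a, P a * ind (f (Ng S T i a b t r) = c)) ^ 2 :=
              pullc P _

lemma E4 (S' : Finset (Fin n)) (hT : T = S' \ S) (hSS' : S ⊆ S') (hi : i ∉ S') :
    eFun f P (insert i S') = ∑ r, P r * ∑ c,
      (∑ b, P b * ∑ t, P t * ∑ a, P a * ind (f (Ng S T i a b t r) = c)) ^ 2 := by
  have hiS : i ∉ S := fun h => hi (hSS' h)
  have hiT : i ∉ T := by rw [hT]; simp [Finset.mem_sdiff, hi]
  have hTS : ∀ j ∈ T, j ∉ S := fun j hj => by
    rw [hT] at hj; exact (Finset.mem_sdiff.mp hj).2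
  unfold eFun
  calc ∑ x, P x * ∑ z, P z * ind (f (Mg (insert i S') z x) = f x)
      = ∑ r, P r * ∑ t, P t * ∑ b, P b * ∑ a, P a *
          ∑ z, P z * ind (f (Mg (insert i S') z (Ng S T i a b t r))
            = f (Ng S T i a b t r)) :=
        FSL3 q P hPQ hq1 S T i _
    _ = ∑ r, P r * ∑ c,
          (∑ b, P b * ∑ t, P t * ∑ a, P a * ind (f (Ng S T i a b t r) = c)) ^ 2 := by
        refine csum P fun r => ?_
        have hz : ∀ b t a, (∑ z, P z * ind (f (Mg (insert i S') z (Ng S T i a b t r))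
              = f (Ng S T i a b t r)))
            = ∑ v1, P v1 * ∑ v2, P v2 * ∑ v3, P v3 *
                ind (f (Ng S T i v3 v1 v2 r) = f (Ng S T i a b t r)) := by
          intro b t a
          simp only [NgiS' S S' T i hT hSS' hi]
          rw [FSL q P hPQ hq1 S
            (fun z => ind (f (Ng S T i z z z r) = f (Ng S T i a b t r)))]
          simp only [Ng8 S T i hiS hTS]
          rw [split2 P P _]
          have hu : ∀ u, (∑ v, P v * ind (f (Ng S T i u v v r) = f (Ng S T i a b t r)))
              = ∑ v2, P v2 * ∑ v3, P v3 *
                  ind (f (Ng S T i u v2 v3 r) = f (Ng S T i a b t r)) := by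
            intro u
            rw [FSL q P hPQ hq1 ({i} : Finset (Fin n))
              (fun v => ind (f (Ng S T i u v v r) = f (Ng S T i a b t r)))]
            simp only [Ng9 S T i hiT]
            rw [split2 P P _]
          rw [csum P hu]
          rw [swap2 P P (fun u v2 => ∑ v3, P v3 *
            ind (f (Ng S T i u v2 v3 r) = f (Ng S T i a b t r)))]
          exact csum P fun v1 => swap2 P P (fun u v3 =>
            ind (f (Ng S T i u v1 v3 r) = f (Ng S T i a b t r)))
        calc ∑ t, P t * ∑ b, P b * ∑ a, P a *
              ∑ z, P z * ind (f (Mg (insert i S') z (Ng S T i a b t r))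
                = f (Ng S T i a b t r))
            = ∑ b, P b * ∑ t, P t * ∑ a, P a *
              ∑ z, P z * ind (f (Mg (insert i S') z (Ng S T i a b t r))
                = f (Ng S T i a b t r)) := swap2 P P _
          _ = ∑ b, P b * ∑ t, P t * ∑ a, P a *
              (∑ v1, P v1 * ∑ v2, P v2 * ∑ v3, P v3 *
                ind (f (Ng S T i v3 v1 v2 r) = f (Ng S T i a b t r))) :=
              csum P fun b => csum P fun t => csum P fun a => hz b t a
          _ = ∑ c, (∑ b, P b * ∑ t, P t * ∑ a, P a *
                ind (f (Ng S T i a b t r) = c)) ^ 2 :=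
              G2triple P (fun u1 u2 u3 => f (Ng S T i u3 u1 u2 r))

end Elemmas


end Aux

/-- under a product (feature-independent) distribution, the global
contrastive value function is submodular. -/
theorem vgCon_submodular {n : ℕ} {X : Fin n → Type*}
    [∀ i, Fintype (X i)] [∀ i, Nonempty (X i)]
    {C : Type*} [Fintype C] [Nonempty C]
    (f : (∀ i, X i) → C) (P : (∀ i, X i) → ℝ)
    (hP0 : ∀ x, 0 ≤ P x) (hP1 : ∑ x, P x = 1)
    (p : ∀ i, X i → ℝ) (hp0 : ∀ i v, 0 ≤ p i v)
    (hprod : ∀ x, P x = ∏ i, p i (x i))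
    (S S' : Finset (Fin n)) (hSS' : S ⊆ S') (i : Fin n) (hi : i ∉ S') :
    vgCon f P (insert i S') - vgCon f P S' ≤
      vgCon f P (insert i S) - vgCon f P S := by
  classical
  -- normalize the weights
  have htprod : ∏ i', (∑ v, p i' v) = 1 := by
    rw [Fintype.prod_sum, ← hP1]
    exact Finset.sum_congr rfl fun x _ => (hprod x).symm
  have ht_pos : ∀ i', 0 < ∑ v, p i' v := by
    intro i'
    rcases lt_or_eq_of_le (Finset.sum_nonneg fun v _ => hp0 i' v) with h | h
    · exact h
    · exfalso
      have : (∏ i', (∑ v, p i' v)) = 0 :=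
        Finset.prod_eq_zero (Finset.mem_univ i') h.symm
      rw [htprod] at this; norm_num at this
  set q : ∀ i', X i' → ℝ := fun i' v => p i' v / (∑ w, p i' w) with hq
  have hq1 : ∀ i', ∑ v, q i' v = 1 := by
    intro i'
    rw [hq, ← Finset.sum_div]
    exact div_self (ne_of_gt (ht_pos i'))
  have hPQ : ∀ x, P x = ∏ i', q i' (x i') := by
    intro x
    rw [hprod x, hq,
      show (∏ i', p i' (x i') / (∑ w, p i' w))
        = (∏ i', p i' (x i')) / ∏ i', (∑ w, p i' w) from Finset.prod_div_distrib _ _,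
      htprod, div_one]
  -- rewrite vgCon in terms of eFun
  rw [vgCon_one_sub q P hPQ hq1 f hP0 (insert i S'),
    vgCon_one_sub q P hPQ hq1 f hP0 S',
    vgCon_one_sub q P hPQ hq1 f hP0 (insert i S),
    vgCon_one_sub q P hPQ hq1 f hP0 S]
  suffices h : eFun f P (insert i S) + eFun f P S' ≤
      eFun f P S + eFun f P (insert i S') by linarith
  set T : Finset (Fin n) := S' \ S with hT
  have hiS : i ∉ S := fun h => hi (hSS' h)
  rw [E1 q P hPQ hq1 S T i f, E2 q P hPQ hq1 S T i f hiS,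
    E3 q P hPQ hq1 S T i f S' hT hSS' hi, E4 q P hPQ hq1 S T i f S' hT hSS' hi]
  rw [← Finset.sum_add_distrib, ← Finset.sum_add_distrib]
  apply Finset.sum_le_sum
  intro r _
  rw [← mul_add, ← mul_add]
  apply mul_le_mul_of_nonneg_left _ (hP0 r)
  rw [← Finset.sum_add_distrib, ← Finset.sum_add_distrib]
  apply Finset.sum_le_sum
  intro c _
  exact anova P P hP0 hP0 hP1 hP1
    (fun b t => ∑ a, P a * ind (f (Ng S T i a b t r) = c))
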